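/- Let Γ be a set of subsets of a set A, and let ρ, ρ' ∈ DD(Γ) be relations disjunctively definable from Γ such that pt(ρ) ⊑ pt(ρ') in ℕ^Γ (that is, pt(ρ)(γ) ≤ pt(ρ')(γ) for all γ ∈ Γ and the supports of pt(ρ) and pt(ρ') coincide). Then Pol({ρ'}) ⊆ Pol({ρ}). -/
import Mathlib


/-- The `n`-ary cross relation defined by the tuple `γ` of unary relations:
`{(x₁,…,xₙ) : x₁ ∈ γ₁ ∨ … ∨ xₙ ∈ γₙ}`. -/
def Cross {A : Type*} {n : ℕ} (γ : Fin n → Set A) : Set (Fin n → A) :=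
  {x | ∃ i, x i ∈ γ i}

/-- A finitary relation on `A`: an arity together with a set of tuples. -/
abbrev FinRel (A : Type*) := Σ n : ℕ, Set (Fin n → A)

/-- A `k`-ary operation `f` preserves an `n`-ary relation `ρ`. -/
def Preserves {A : Type*} {k n : ℕ} (f : (Fin k → A) → A) (ρ : Set (Fin n → A)) : Prop :=
  ∀ r : Fin k → Fin n → A, (∀ j, r j ∈ ρ) → (fun i => f fun j => r j i) ∈ ρ

/-- A finitary operation on `A` of positive arity `k + 1`. -/
abbrev Op (A : Type*) := Σ k : ℕ, (Fin (k + 1) → A) → A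

/-- The polymorphism clone of a set of finitary relations. -/
def Pol {A : Type*} (Q : Set (FinRel A)) : Set (Op A) :=
  {f | ∀ ρ ∈ Q, Preserves f.2 ρ.2}

/-- Relations disjunctively definable from the unary language `Γ`. -/
def DD {A : Type*} (Γ : Set (Set A)) : Set (FinRel A) :=
  {ρ | 1 ≤ ρ.1 ∧ ∃ γ : Fin ρ.1 → Set A, (∀ i, γ i ∈ Γ) ∧ ρ.2 = Cross γ}

/-- Support of a tuple of naturals. -/
def supp {I : Type*} (x : I → ℕ) : Set I := {i | x i ≠ 0}

/-- The order `⊑` on `ℕ^I`: pointwise `≤` together with equal supports. -/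
def sle {I : Type*} (x y : I → ℕ) : Prop := (∀ i, x i ≤ y i) ∧ supp x = supp y

/-- Downsets of the poset `(ℕ^I, ⊑)`. -/
def IsSleDownset {I : Type*} (X : Set (I → ℕ)) : Prop :=
  ∀ x ∈ X, ∀ y, sle y x → y ∈ X

open Classical in
/-- The canonical parameter tuple of a relation: the unique tuple of members of `Γ`
defining it as a cross if it is a proper subset of the full power, and `(A,…,A)` otherwise. -/
noncomputable def param {A : Type*} (Γ : Set (Set A)) (ρ : FinRel A) : Fin ρ.1 → Set A :=
  if ρ.2 = Set.univ then fun _ => Set.univ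
  else if h : ∃ γ : Fin ρ.1 → Set A, (∀ i, γ i ∈ Γ) ∧ ρ.2 = Cross γ then h.choose
  else fun _ => ∅

/-- The pattern of a relation: how often each `γ ∈ Γ` occurs in its canonical parameter. -/
noncomputable def pt {A : Type*} (Γ : Set (Set A)) (ρ : FinRel A) : ↥Γ → ℕ :=
  fun γ => Nat.card {i : Fin ρ.1 // param Γ ρ i = (γ : Set A)}

/-- The encoding map `I`: the downset of `(ℕ^Γ, ⊑)` generated by the patterns of `Q`. -/
def enc {A : Type*} (Γ : Set (Set A)) (Q : Set (FinRel A)) : Set (↥Γ → ℕ) :=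
  {x | ∃ ρ ∈ Q, sle x (pt Γ ρ)}

/-- `F^Inv`: the relations in `DD Γ` preserved by every operation in `F`. -/
def InvDD {A : Type*} (Γ : Set (Set A)) (F : Set (Op A)) : Set (FinRel A) :=
  {ρ | ρ ∈ DD Γ ∧ ∀ f ∈ F, Preserves f.2 ρ.2}

section Aux

open Classical

lemma emb_of_nat_card_le {α β : Type*} [Finite α] [Finite β]
    (h : Nat.card α ≤ Nat.card β) : Nonempty (α ↪ β) := by
  cases nonempty_fintype α; cases nonempty_fintype β
  rw [Nat.card_eq_fintype_card, Nat.card_eq_fintype_card] at h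
  exact Function.Embedding.nonempty_of_card_le h

lemma preserves_univ {A : Type*} {k n : ℕ} (f : (Fin k → A) → A) :
    Preserves f (Set.univ : Set (Fin n → A)) := fun _ _ => Set.mem_univ _

lemma preserves_cross_of_surj {A : Type*} {k n n' : ℕ} (f : (Fin k → A) → A)
    (g : Fin n → Set A) (g' : Fin n' → Set A) (σ : Fin n' → Fin n)
    (hσ : Function.Surjective σ) (hg : ∀ i', g' i' = g (σ i'))
    (h : Preserves f (Cross g')) : Preserves f (Cross g) := by
  intro r hr
  have hrows : ∀ j, (fun i' => r j (σ i')) ∈ Cross g' := by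
    intro j
    obtain ⟨i, hi⟩ := hr j
    obtain ⟨i', rfl⟩ := hσ i
    exact ⟨i', by rw [hg]; exact hi⟩
  obtain ⟨i', hi'⟩ := h (fun j i' => r j (σ i')) hrows
  exact ⟨σ i', by rw [← hg]; exact hi'⟩

/-- Existence of the surjection matching fibers, given pattern inequalities. -/
lemma exists_surj {A : Type*} (Γ : Set (Set A)) {n n' : ℕ}
    (g : Fin n → Set A) (g' : Fin n' → Set A)
    (hgΓ : ∀ i, g i ∈ Γ) (hg'Γ : ∀ i', g' i' ∈ Γ)
    (hle : ∀ γ : Set A, Nat.card {i // g i = γ} ≤ Nat.card {i' // g' i' = γ})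
    (hsupp : ∀ i', ∃ i, g i = g' i') :
    ∃ σ : Fin n' → Fin n, Function.Surjective σ ∧ ∀ i', g' i' = g (σ i') := by
  -- fiberwise embeddings
  have hE : ∀ γ : Set A, ∃ e : {i // g i = γ} → {i' // g' i' = γ}, Function.Injective e := by
    intro γ
    by_cases hne : Nonempty {i // g i = γ}
    · obtain ⟨e⟩ := emb_of_nat_card_le (hle γ)
      exact ⟨e, e.injective⟩
    · exact ⟨fun x => absurd ⟨x⟩ hne, fun x => absurd ⟨x⟩ hne⟩
  choose E hEinj using hE
  set ι : Fin n → Fin n' := fun i => (E (g i) ⟨i, rfl⟩).1 with hι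
  have hιg : ∀ i, g' (ι i) = g i := fun i => (E (g i) ⟨i, rfl⟩).2
  have key : ∀ (c : Fin n) (γ : Set A) (h : g c = γ),
      ((E (g c) ⟨c, rfl⟩ : {i' // g' i' = g c}) : Fin n') = ((E γ ⟨c, h⟩) : Fin n') := by
    intro c γ h
    subst h
    rfl
  have hιinj : Function.Injective ι := by
    intro a b hab
    have hgab : g a = g b := by rw [← hιg a, ← hιg b, hab]
    have hab' : ((E (g b) ⟨a, hgab⟩) : Fin n') = ((E (g b) ⟨b, rfl⟩) : Fin n') := by
      rw [← key a (g b) hgab]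
      exact hab
    have := hEinj (g b) (Subtype.ext hab')
    exact congrArg Subtype.val this
  -- define σ
  refine ⟨fun i' => if h : ∃ i, ι i = i' then h.choose else (hsupp i').choose, ?_, ?_⟩
  · intro i
    refine ⟨ι i, ?_⟩
    have h : ∃ i0, ι i0 = ι i := ⟨i, rfl⟩
    simp only [dif_pos h]
    exact hιinj h.choose_spec
  · intro i'
    by_cases h : ∃ i, ι i = i'
    · simp only [dif_pos h]
      have := hιg h.choose
      rw [h.choose_spec] at this
      exact this
    · simp only [dif_neg h]
      exact ((hsupp i').choose_spec).symm

lemma param_spec {A : Type*} (Γ : Set (Set A)) (ρ : FinRel A) (hρ : ρ ∈ DD Γ)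
    (hne : ρ.2 ≠ Set.univ) :
    (∀ i, param Γ ρ i ∈ Γ) ∧ ρ.2 = Cross (param Γ ρ) := by
  have h := hρ.2
  rw [param, if_neg hne, dif_pos h]
  exact h.choose_spec

end Aux

/-- If the patterns of two disjunctively definable relations satisfy `pt ρ ⊑ pt ρ'`
in `ℕ^Γ`, then the polymorphism clones satisfy the dual inclusion. -/
theorem pol_antitone_of_pattern_sle {A : Type*} (Γ : Set (Set A))
    (ρ ρ' : FinRel A) (hρ : ρ ∈ DD Γ) (hρ' : ρ' ∈ DD Γ)
    (hle : sle (pt Γ ρ) (pt Γ ρ')) :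
    Pol {ρ'} ⊆ Pol {ρ} := by
  intro f hf
  intro τ hτ
  rw [Set.mem_singleton_iff] at hτ
  rw [hτ]
  have hf' : Preserves f.2 ρ'.2 := hf ρ' rfl
  by_cases hu : ρ.2 = Set.univ
  · rw [hu]
    exact preserves_univ f.2
  obtain ⟨hgΓ, hgeq⟩ := param_spec Γ ρ hρ hu
  set g := param Γ ρ with hg
  have hsuppfun : ∀ γ : ↥Γ, pt Γ ρ γ ≠ 0 ↔ pt Γ ρ' γ ≠ 0 := by
    intro γ
    have := hle.2
    rw [Set.ext_iff] at this
    exact this γ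
  -- rule out ρ'.2 = univ
  by_cases hu' : ρ'.2 = Set.univ
  · exfalso
    apply hu
    have hp' : param Γ ρ' = fun _ => Set.univ := by
      rw [param, if_pos hu']
    have hall : ∀ i, g i = Set.univ := by
      intro i
      have h1 : pt Γ ρ ⟨g i, hgΓ i⟩ ≠ 0 :=
        Nat.card_ne_zero.2 ⟨⟨⟨i, rfl⟩⟩, inferInstance⟩
      have h2 := (hsuppfun ⟨g i, hgΓ i⟩).1 h1
      rw [pt, Nat.card_ne_zero] at h2
      obtain ⟨⟨j, hj⟩⟩ := h2.1
      rw [hp'] at hj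
      exact hj.symm
    rw [hgeq, Set.eq_univ_iff_forall]
    intro x
    exact ⟨⟨0, hρ.1⟩, by rw [hall ⟨0, hρ.1⟩]; trivial⟩
  obtain ⟨hg'Γ, hg'eq⟩ := param_spec Γ ρ' hρ' hu'
  set g' := param Γ ρ' with hg'
  have hcard : ∀ γ : Set A, Nat.card {i // g i = γ} ≤ Nat.card {i' // g' i' = γ} := by
    intro γ
    by_cases hγ : γ ∈ Γ
    · exact hle.1 ⟨γ, hγ⟩
    · have : IsEmpty {i // g i = γ} := ⟨fun ⟨i, hi⟩ => hγ (hi ▸ hgΓ i)⟩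
      simp [Nat.card_of_isEmpty]
  have hsupp : ∀ i', ∃ i, g i = g' i' := by
    intro i'
    have h1 : pt Γ ρ' ⟨g' i', hg'Γ i'⟩ ≠ 0 :=
      Nat.card_ne_zero.2 ⟨⟨⟨i', rfl⟩⟩, inferInstance⟩
    have h2 := (hsuppfun ⟨g' i', hg'Γ i'⟩).2 h1
    rw [pt, Nat.card_ne_zero] at h2
    obtain ⟨⟨i, hi⟩⟩ := h2.1
    exact ⟨i, hi⟩
  obtain ⟨σ, hσ, hσg⟩ := exists_surj Γ g g' hgΓ hg'Γ hcard hsupp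
  rw [hgeq]
  apply preserves_cross_of_surj f.2 g g' σ hσ hσg
  rw [← hg'eq]
  exact hf'
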